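/- arXiv:2502.13523 — 5 statements merged into one kernel-verified Lean document; each statement's English description precedes it below -/
import Mathlib

section
/- Let z : [0, T] → ℂ be a continuous function with z(t) ≠ 0 for all t ∈ [0, T], and let Φ : [0, T] → ℝ be a continuous argument of z. Then the set {t ∈ [0, T] : Re(z(t)) = 0} has at least ⌊|Φ(T) − Φ(0)|/π⌋ elements. -/
open Set

/-- If `z : [0,T] → ℂ` is continuous and nonvanishing and `Φ` is a continuous
argument of `z` on `[0,T]`, then the set of zeros of `Re (z t)` in `[0,T]` has at least
`⌊|Φ T − Φ 0| / π⌋` elements. -/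
theorem stmt0 (T : ℝ) (hT : 0 ≤ T) (z : ℝ → ℂ) (Φ : ℝ → ℝ)
    (hz_cont : ContinuousOn z (Icc 0 T))
    (hz_ne : ∀ t ∈ Icc 0 T, z t ≠ 0)
    (hΦ_cont : ContinuousOn Φ (Icc 0 T))
    (hΦ_arg : ∀ t ∈ Icc 0 T,
      z t = (‖z t‖ : ℂ) * Complex.exp ((Φ t : ℂ) * Complex.I)) :
    ∃ F : Finset ℝ, ↑F ⊆ {t ∈ Icc 0 T | (z t).re = 0} ∧
      ⌊|Φ T - Φ 0| / Real.pi⌋₊ ≤ F.card := by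
  have hπ : (0:ℝ) < Real.pi := Real.pi_pos
  set a : ℝ := min (Φ 0) (Φ T) with ha
  set b : ℝ := max (Φ 0) (Φ T) with hb
  set N : ℕ := ⌊|Φ T - Φ 0| / Real.pi⌋₊ with hN
  have hba : b - a = |Φ T - Φ 0| := by
    rw [ha, hb, max_comm, min_comm, max_sub_min_eq_abs, abs_sub_comm]
  have hNle : (N : ℝ) * Real.pi ≤ b - a := by
    rw [hba]
    have h1 : (N : ℝ) ≤ |Φ T - Φ 0| / Real.pi :=
      Nat.floor_le (div_nonneg (abs_nonneg _) hπ.le)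
    calc (N : ℝ) * Real.pi ≤ (|Φ T - Φ 0| / Real.pi) * Real.pi := by
          exact mul_le_mul_of_nonneg_right h1 hπ.le
      _ = |Φ T - Φ 0| := div_mul_cancel₀ _ hπ.ne'
  set m0 : ℤ := ⌈(a - Real.pi/2)/Real.pi⌉ with hm0
  set c : ℕ → ℝ := fun k => Real.pi/2 + Real.pi * ((m0 : ℝ) + k) with hc
  -- each c k for k < N lies in [a,b]
  have hc_mem : ∀ k, k < N → c k ∈ Icc a b := by
    intro k hk
    constructor
    · have h1 : (a - Real.pi/2)/Real.pi ≤ (m0 : ℝ) := Int.le_ceil _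
      have h2 : a - Real.pi/2 ≤ Real.pi * (m0 : ℝ) := by
        rw [mul_comm]
        calc a - Real.pi/2 = ((a - Real.pi/2)/Real.pi) * Real.pi :=
              (div_mul_cancel₀ _ hπ.ne').symm
          _ ≤ (m0 : ℝ) * Real.pi := mul_le_mul_of_nonneg_right h1 hπ.le
      have h3 : (0:ℝ) ≤ Real.pi * k := by positivity
      simp only [hc]
      nlinarith
    · have h1 : (m0 : ℝ) < (a - Real.pi/2)/Real.pi + 1 := Int.ceil_lt_add_one _
      have h2 : Real.pi * (m0 : ℝ) < a - Real.pi/2 + Real.pi := by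
        have := mul_lt_mul_of_pos_left h1 hπ
        calc Real.pi * (m0 : ℝ) < Real.pi * ((a - Real.pi/2)/Real.pi + 1) := this
          _ = a - Real.pi/2 + Real.pi := by
            rw [mul_add, mul_one, mul_div_cancel₀ _ hπ.ne']
      have h3 : ((k:ℝ) + 1) ≤ (N : ℝ) := by exact_mod_cast hk
      have h4 : Real.pi * ((k:ℝ) + 1) ≤ Real.pi * N :=
        mul_le_mul_of_nonneg_left h3 hπ.le
      simp only [hc]
      nlinarith
  -- intermediate value theorem
  have hIVT : Icc a b ⊆ Φ '' Icc 0 T := by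
    have h1 : uIcc (0:ℝ) T = Icc 0 T := uIcc_of_le hT
    have h2 : uIcc (Φ 0) (Φ T) = Icc a b := rfl
    rw [← h1, ← h2]
    exact intermediate_value_uIcc (by rwa [h1])
  have key : ∀ k : ℕ, ∃ t, k < N → t ∈ Icc 0 T ∧ Φ t = c k := by
    intro k
    by_cases hk : k < N
    · obtain ⟨t, ht, hΦt⟩ := hIVT (hc_mem k hk)
      exact ⟨t, fun _ => ⟨ht, hΦt⟩⟩
    · exact ⟨0, fun h => absurd h hk⟩
  choose t ht using key
  refine ⟨(Finset.range N).image t, ?_, ?_⟩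
  · intro x hx
    simp only [Finset.coe_image, Finset.coe_range, mem_image, mem_Iio] at hx
    obtain ⟨k, hk, rfl⟩ := hx
    obtain ⟨htmem, hΦt⟩ := ht k hk
    refine ⟨htmem, ?_⟩
    rw [hΦ_arg _ htmem, Complex.re_ofReal_mul, Complex.exp_ofReal_mul_I_re]
    have hcos : Real.cos (Φ (t k)) = 0 := by
      rw [hΦt, Real.cos_eq_zero_iff]
      refine ⟨m0 + k, ?_⟩
      push_cast
      ring
    rw [hcos, mul_zero]
  · rw [Finset.card_image_of_injOn, Finset.card_range]
    intro k1 hk1 k2 hk2 heq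
    simp only [Finset.coe_range, mem_Iio] at hk1 hk2
    have h1 := (ht k1 hk1).2
    have h2 := (ht k2 hk2).2
    rw [heq] at h1
    have : c k1 = c k2 := h1.symm.trans h2
    simp only [hc] at this
    field_simp at this
    exact_mod_cast (show (k1:ℝ) = k2 by linarith)
end

section
/- Let z : [0, ∞) → ℂ be a continuous function with z(t) ≠ 0 for all t ≥ 0, let Φ : [0, ∞) → ℝ be a continuous argument of z, and suppose the limit Ω := lim_{T→∞} Φ(T)/T exists and Ω ≠ 0. Then for every real c with 0 < c < |Ω|/π there exists T₀ > 0 such that for all T ≥ T₀ the set {t ∈ [0, T] : Re(z(t)) = 0} is infinite or has cardinality at least c·T. -/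
open Set Filter

/-- If `z : [0,∞) → ℂ` is continuous and nonvanishing, `Φ` is a continuous
argument of `z`, and the mean motion `Ω = lim_{T→∞} Φ(T)/T` exists and is nonzero, then for
every `0 < c < |Ω|/π` there is `T₀ > 0` such that for all `T ≥ T₀` the set of zeros of
`Re (z t)` in `[0,T]` is infinite or has at least `c·T` elements. -/
theorem stmt1 (z : ℝ → ℂ) (Φ : ℝ → ℝ) (Ω : ℝ)
    (hz_cont : ContinuousOn z (Ici 0))
    (hz_ne : ∀ t : ℝ, 0 ≤ t → z t ≠ 0)
    (hΦ_cont : ContinuousOn Φ (Ici 0))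
    (hΦ_arg : ∀ t : ℝ, 0 ≤ t →
      z t = ((‖z t‖ : ℝ) : ℂ) * Complex.exp ((Φ t : ℂ) * Complex.I))
    (hΩ : Tendsto (fun T => Φ T / T) atTop (nhds Ω)) (hΩ0 : Ω ≠ 0)
    (c : ℝ) (hc0 : 0 < c) (hc : c < |Ω| / Real.pi) :
    ∃ T₀ > (0 : ℝ), ∀ T ≥ T₀,
      {t ∈ Icc 0 T | (z t).re = 0}.Infinite ∨
        c * T ≤ ({t ∈ Icc 0 T | (z t).re = 0}.ncard : ℝ) := by
  have hπ : (0:ℝ) < Real.pi := Real.pi_pos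
  have hcπ : c * Real.pi < |Ω| := by
    rw [lt_div_iff₀ hπ] at hc; exact hc
  set ε : ℝ := (|Ω| - c * Real.pi) / 2 with hε_def
  have hε : 0 < ε := by
    have : 0 < |Ω| - c * Real.pi := by linarith
    positivity
  obtain ⟨N, hN⟩ := Metric.tendsto_atTop.mp hΩ ε hε
  set C : ℝ := |Φ 0| with hC_def
  have hC0 : 0 ≤ C := abs_nonneg _
  refine ⟨max N (max 1 ((C + Real.pi)/ε)), lt_of_lt_of_le one_pos
    (le_max_of_le_right (le_max_left _ _)), ?_⟩
  intro T hT
  have hT1 : (1:ℝ) ≤ T := le_trans (le_max_of_le_right (le_max_left _ _)) hT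
  have hT0 : (0:ℝ) < T := lt_of_lt_of_le one_pos hT1
  have hTN : N ≤ T := le_trans (le_max_left _ _) hT
  have hTε : C + Real.pi ≤ ε * T := by
    have h1 : (C + Real.pi)/ε ≤ T :=
      le_trans (le_max_of_le_right (le_max_right _ _)) hT
    rw [div_le_iff₀ hε] at h1; linarith
  -- real part formula
  have hre : ∀ t : ℝ, 0 ≤ t → (z t).re = ‖z t‖ * Real.cos (Φ t) := by
    intro t ht
    conv_lhs => rw [hΦ_arg t ht]
    simp [Complex.exp_ofReal_mul_I_re]
  -- lower bound on |Φ T|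
  have hdist : |Φ T / T - Ω| < ε := by
    have := hN T hTN; rwa [Real.dist_eq] at this
  have habs : (|Ω| - ε) * T ≤ |Φ T| := by
    have h1 : |Ω| - |Φ T / T| ≤ |Φ T / T - Ω| := by
      have := abs_sub_abs_le_abs_sub Ω (Φ T / T)
      rwa [abs_sub_comm] at this
    have h2 : |Ω| - ε ≤ |Φ T / T| := by linarith
    have h3 : |Φ T / T| = |Φ T| / T := by
      rw [abs_div, abs_of_pos hT0]
    rw [h3] at h2
    calc (|Ω| - ε) * T ≤ (|Φ T| / T) * T := by
          exact mul_le_mul_of_nonneg_right h2 (le_of_lt hT0)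
      _ = |Φ T| := by field_simp
  set a : ℝ := min (Φ 0) (Φ T) with ha_def
  set b : ℝ := max (Φ 0) (Φ T) with hb_def
  have hba : b - a = |Φ T - Φ 0| := max_sub_min_eq_abs (Φ 0) (Φ T)
  have hba' : (|Ω| - ε) * T - C ≤ b - a := by
    rw [hba]
    have := abs_sub_abs_le_abs_sub (Φ T) (Φ 0)
    have h2 : |Φ T| - C ≤ |Φ T - Φ 0| := by rw [hC_def]; linarith
    linarith
  have hsplit : (|Ω| - ε) * T = c * Real.pi * T + ε * T := by
    have h : |Ω| = c * Real.pi + 2 * ε := by rw [hε_def]; ring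
    rw [h]; ring
  have hkey : (c * T + 1) * Real.pi ≤ b - a := by nlinarith
  set m : ℤ := ⌈(a - Real.pi/2)/Real.pi⌉ with hm_def
  set n : ℤ := ⌊(b - Real.pi/2)/Real.pi⌋ with hn_def
  have hm : (m:ℝ) < (a - Real.pi/2)/Real.pi + 1 := Int.ceil_lt_add_one _
  have hm' : (a - Real.pi/2)/Real.pi ≤ m := Int.le_ceil _
  have hn : (b - Real.pi/2)/Real.pi - 1 < n := Int.sub_one_lt_floor _
  have hn' : (n:ℝ) ≤ (b - Real.pi/2)/Real.pi := Int.floor_le _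
  have hdivsub : (b - Real.pi/2)/Real.pi - (a - Real.pi/2)/Real.pi = (b-a)/Real.pi := by
    ring
  have hcount : c * T ≤ (n:ℝ) + 1 - m := by
    have hba2 : c * T + 1 ≤ (b - a)/Real.pi := by
      rw [le_div_iff₀ hπ]; exact hkey
    linarith
  -- IVT setup
  have hT0' : (0:ℝ) ≤ T := le_of_lt hT0
  have hIcc : uIcc (0:ℝ) T = Icc 0 T := uIcc_of_le hT0'
  have hΦT : ContinuousOn Φ (uIcc (0:ℝ) T) := by
    rw [hIcc]; exact hΦ_cont.mono (Icc_subset_Ici_self)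
  have hIVT := intermediate_value_uIcc hΦT
  have hmem : ∀ y : ℝ, a ≤ y → y ≤ b → y ∈ uIcc (Φ 0) (Φ T) := by
    intro y h1 h2
    rw [Set.mem_uIcc]
    rcases le_total (Φ 0) (Φ T) with h | h
    · rw [ha_def, min_eq_left h] at h1
      rw [hb_def, max_eq_right h] at h2
      exact Or.inl ⟨h1, h2⟩
    · rw [ha_def, min_eq_right h] at h1
      rw [hb_def, max_eq_left h] at h2
      exact Or.inr ⟨h1, h2⟩
  have hex : ∀ k : ℤ, k ∈ Finset.Icc m n →
      ∃ t, t ∈ Icc (0:ℝ) T ∧ Φ t = Real.pi/2 + k * Real.pi := by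
    intro k hk
    rw [Finset.mem_Icc] at hk
    have hk1 : (m:ℝ) ≤ k := by exact_mod_cast hk.1
    have hk2 : (k:ℝ) ≤ n := by exact_mod_cast hk.2
    have hy1 : a ≤ Real.pi/2 + k * Real.pi := by
      have : (a - Real.pi/2)/Real.pi ≤ (k:ℝ) := le_trans hm' hk1
      rw [div_le_iff₀ hπ] at this; linarith
    have hy2 : Real.pi/2 + k * Real.pi ≤ b := by
      have : (k:ℝ) ≤ (b - Real.pi/2)/Real.pi := le_trans hk2 hn'
      rw [le_div_iff₀ hπ] at this; linarith
    obtain ⟨t, ht, hΦt⟩ := hIVT (hmem _ hy1 hy2)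
    rw [hIcc] at ht
    exact ⟨t, ht, hΦt⟩
  classical
  set f : ℤ → ℝ := fun k =>
    if h : ∃ t, t ∈ Icc (0:ℝ) T ∧ Φ t = Real.pi/2 + k * Real.pi then h.choose else 0
    with hf_def
  have hf : ∀ k ∈ Finset.Icc m n,
      f k ∈ Icc (0:ℝ) T ∧ Φ (f k) = Real.pi/2 + k * Real.pi := by
    intro k hk
    have h := hex k hk
    simp only [hf_def, dif_pos h]
    exact h.choose_spec
  set S : Set ℝ := {t ∈ Icc 0 T | (z t).re = 0} with hS_def
  have hsub : f '' ↑(Finset.Icc m n) ⊆ S := by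
    rintro x ⟨k, hk, rfl⟩
    rw [Finset.mem_coe] at hk
    obtain ⟨htmem, hΦt⟩ := hf k hk
    refine ⟨htmem, ?_⟩
    rw [hre _ htmem.1, hΦt]
    have : Real.cos (Real.pi/2 + k * Real.pi) = 0 := by
      rw [Real.cos_eq_zero_iff]
      exact ⟨k, by ring⟩
    rw [this, mul_zero]
  have hinj : Set.InjOn f ↑(Finset.Icc m n) := by
    intro k1 hk1 k2 hk2 heq
    rw [Finset.mem_coe] at hk1 hk2
    have h1 := (hf k1 hk1).2
    have h2 := (hf k2 hk2).2
    rw [heq, h2] at h1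
    have : (k2:ℝ) * Real.pi = (k1:ℝ) * Real.pi := by linarith
    have := mul_right_cancel₀ (ne_of_gt hπ) this
    exact_mod_cast this.symm
  by_cases hS : S.Infinite
  · exact Or.inl hS
  · right
    have hSfin : S.Finite := Set.not_infinite.mp hS
    have h1 : (Finset.Icc m n).card = (f '' ↑(Finset.Icc m n)).ncard := by
      rw [Set.ncard_image_of_injOn hinj, Set.ncard_coe_finset]
    have h2 : (f '' ↑(Finset.Icc m n)).ncard ≤ S.ncard :=
      Set.ncard_le_ncard hsub hSfin
    have h3 : c * T ≤ ((Finset.Icc m n).card : ℝ) := by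
      rw [Int.card_Icc]
      have h4 : ((n + 1 - m : ℤ) : ℝ) ≤ (((n + 1 - m).toNat : ℤ) : ℝ) := by
        exact_mod_cast Int.self_le_toNat _
      push_cast at h4 ⊢
      linarith
    calc c * T ≤ ((Finset.Icc m n).card : ℝ) := h3
      _ ≤ (S.ncard : ℝ) := by exact_mod_cast le_trans h1.le h2
end

section
/- Let λ₁ > λ₂ > 0 and a₁ > a₂ > 0 be real numbers, and let m(t) := a₁·cos(λ₁ t) + a₂·cos(λ₂ t). Then for every T > 0 the set Z(T) := {t ∈ [0, T] : m(t) = 0} is finite and satisfies ⌊λ₁ T/π⌋ ≤ card(Z(T)) ≤ λ₁ T/π + 1. -/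
open Set

/-- Auxiliary: if `g` is differentiable with derivative `g'`, and at every zero of `g`
inside `Ioo a b` the derivative is negative, then `g` has at most one zero in `Ioo a b`. -/
lemma stmt4_unique_zero_aux (g g' : ℝ → ℝ) (hg : ∀ x, HasDerivAt g (g' x) x)
    (a b : ℝ)
    (hd : ∀ u ∈ Set.Ioo a b, g u = 0 → g' u < 0) :
    ∀ t ∈ Set.Ioo a b, ∀ s ∈ Set.Ioo a b, g t = 0 → g s = 0 → t = s := by
  have core : ∀ t ∈ Set.Ioo a b, ∀ s ∈ Set.Ioo a b, g t = 0 → g s = 0 → t < s → False := by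
    intro t ht s hs hgt hgs hts
    have hdt : g' t < 0 := hd t ht hgt
    -- find v ∈ (t,s) with g v < 0
    have hev : ∀ᶠ x in nhdsWithin t {t}ᶜ, slope g t x < 0 :=
      (hasDerivAt_iff_tendsto_slope.1 (hg t)).eventually_lt_const hdt
    have hev' : ∀ᶠ x in nhdsWithin t (Set.Ioi t), slope g t x < 0 :=
      hev.filter_mono (nhdsWithin_mono t (fun x hx => ne_of_gt hx))
    have hmem : Set.Ioo t s ∈ nhdsWithin t (Set.Ioi t) := Ioo_mem_nhdsGT_of_mem ⟨le_refl t, hts⟩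
    obtain ⟨v, hv1, hv2⟩ := (hev'.and (Filter.eventually_of_mem hmem (fun x hx => hx))).exists
    have hgv : g v < 0 := by
      have h1 : slope g t v = g v / (v - t) := by rw [slope_def_field, hgt]; ring
      have h2 : 0 < v - t := by linarith [hv2.1]
      have h3 : g v / (v - t) < 0 := h1 ▸ hv1
      by_contra hcon
      exact absurd (div_nonneg (not_lt.1 hcon) (le_of_lt h2)) (not_le.2 h3)
    -- sInf of {x ∈ [v,s] | 0 ≤ g x}
    set S : Set ℝ := Set.Icc v s ∩ {x | 0 ≤ g x} with hS
    have hgc : Continuous g := by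
      have : Differentiable ℝ g := fun x => (hg x).differentiableAt
      exact this.continuous
    have hScl : IsClosed S := isClosed_Icc.inter (isClosed_le continuous_const hgc)
    have hSne : S.Nonempty := ⟨s, ⟨le_of_lt hv2.2, le_refl s⟩, le_of_eq hgs.symm⟩
    have hSbdd : BddBelow S := ⟨v, fun x hx => hx.1.1⟩
    set u := sInf S with hu
    have huS : u ∈ S := hScl.csInf_mem hSne hSbdd
    have hvu : v < u := by
      rcases lt_or_eq_of_le (huS.1.1) with h | h
      · exact h
      · exact absurd (h ▸ huS.2) (not_le.2 hgv)
    have hneg : ∀ x ∈ Set.Ico v u, g x < 0 := by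
      intro x hx
      by_contra hcon
      have : x ∈ S := ⟨⟨hx.1, le_trans (le_of_lt hx.2) huS.1.2⟩, not_lt.1 hcon⟩
      exact absurd (csInf_le hSbdd this) (not_le.2 hx.2)
    have hgu : g u = 0 := by
      refine le_antisymm ?_ huS.2
      have htd : Filter.Tendsto g (nhdsWithin u (Set.Iio u)) (nhds (g u)) :=
        ((hg u).continuousAt.continuousWithinAt)
      have : ∀ᶠ x in nhdsWithin u (Set.Iio u), g x ≤ 0 := by
        filter_upwards [Ico_mem_nhdsLT_of_mem ⟨hvu, le_refl u⟩] with x hx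
        exact le_of_lt (hneg x hx)
      exact le_of_tendsto htd this
    have huIoo : u ∈ Set.Ioo a b := by
      constructor
      · calc a < t := ht.1
          _ < v := hv2.1
          _ < u := hvu
      · exact lt_of_le_of_lt huS.1.2 hs.2
    have hdu : g' u < 0 := hd u huIoo hgu
    -- slope from the left is ≥ 0
    have hsl : ∀ᶠ x in nhdsWithin u (Set.Iio u), 0 ≤ slope g u x := by
      filter_upwards [Ico_mem_nhdsLT_of_mem ⟨hvu, le_refl u⟩] with x hx
      have h1 : slope g u x = g x / (x - u) := by rw [slope_def_field, hgu]; ring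
      rw [h1]
      exact le_of_lt (div_pos_of_neg_of_neg (hneg x hx) (by linarith [hx.2]))
    have htd2 : Filter.Tendsto (slope g u) (nhdsWithin u (Set.Iio u)) (nhds (g' u)) :=
      (hasDerivAt_iff_tendsto_slope.1 (hg u)).mono_left
        (nhdsWithin_mono u (fun x hx => ne_of_lt hx))
    have : 0 ≤ g' u := ge_of_tendsto htd2 hsl
    linarith
  intro t ht s hs hgt hgs
  rcases lt_trichotomy t s with h | h | h
  · exact absurd (core t ht s hs hgt hgs h) not_false
  · exact h
  · exact absurd (core s hs t ht hgs hgt h) not_false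

/-- Sign of `m` at the grid points `kπ/λ₁`. -/
lemma stmt4_grid_sign (lam₁ lam₂ a₁ a₂ : ℝ) (ha : a₂ < a₁) (ha₂ : 0 < a₂)
    (hlam₁ : 0 < lam₁) (k : ℕ) :
    0 < (-1 : ℝ) ^ k *
      (a₁ * Real.cos (lam₁ * ((k : ℝ) * (Real.pi / lam₁))) +
       a₂ * Real.cos (lam₂ * ((k : ℝ) * (Real.pi / lam₁)))) := by
  have h1 : lam₁ * ((k : ℝ) * (Real.pi / lam₁)) = (k : ℝ) * Real.pi := by
    field_simp
  have h2 : Real.cos ((k : ℝ) * Real.pi) = (-1 : ℝ) ^ k := by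
    have := Real.cos_nat_mul_pi_sub 0 k
    simpa using this
  rw [h1, h2]
  have hc := Real.neg_one_le_cos (lam₂ * ((k : ℝ) * (Real.pi / lam₁)))
  have hc' := Real.cos_le_one (lam₂ * ((k : ℝ) * (Real.pi / lam₁)))
  rcases Nat.even_or_odd k with he | ho
  · rw [he.neg_one_pow]; nlinarith
  · rw [ho.neg_one_pow]; nlinarith

/-- Sign of the derivative of `m` at a zero with `sin (λ₁ t) > 0`. -/
lemma stmt4_deriv_sign (lam₁ lam₂ a₁ a₂ t : ℝ) (hlam : lam₂ < lam₁) (hlam₂ : 0 < lam₂)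
    (ha : a₂ < a₁) (ha₂ : 0 < a₂)
    (hz : a₁ * Real.cos (lam₁ * t) + a₂ * Real.cos (lam₂ * t) = 0)
    (hs : 0 < Real.sin (lam₁ * t)) :
    0 < a₁ * lam₁ * Real.sin (lam₁ * t) + a₂ * lam₂ * Real.sin (lam₂ * t) := by
  set s1 := Real.sin (lam₁ * t)
  set c1 := Real.cos (lam₁ * t)
  set s2 := Real.sin (lam₂ * t)
  set c2 := Real.cos (lam₂ * t)
  have h1 : s1 ^ 2 + c1 ^ 2 = 1 := Real.sin_sq_add_cos_sq _
  have h2 : s2 ^ 2 + c2 ^ 2 = 1 := Real.sin_sq_add_cos_sq _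
  have ha₁ : 0 < a₁ := ha₂.trans ha
  have hc : a₁ * c1 = -(a₂ * c2) := by linarith
  have hcsq : (a₁ * c1) ^ 2 = (a₂ * c2) ^ 2 := by rw [hc]; ring
  have key : a₁ ^ 2 * s1 ^ 2 - a₂ ^ 2 * s2 ^ 2 = a₁ ^ 2 - a₂ ^ 2 := by
    linear_combination a₁ ^ 2 * h1 - a₂ ^ 2 * h2 - hcsq
  have hpos : 0 < a₁ * s1 + a₂ * s2 := by
    by_contra hcon
    push_neg at hcon
    nlinarith [key, mul_pos ha₁ hs]
  linarith [mul_pos hlam₂ hpos, mul_pos (sub_pos.2 hlam) (mul_pos ha₁ hs)]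

/-- Sign of the derivative of `m` at a zero with `sin (λ₁ t) < 0`. -/
lemma stmt4_deriv_sign' (lam₁ lam₂ a₁ a₂ t : ℝ) (hlam : lam₂ < lam₁) (hlam₂ : 0 < lam₂)
    (ha : a₂ < a₁) (ha₂ : 0 < a₂)
    (hz : a₁ * Real.cos (lam₁ * t) + a₂ * Real.cos (lam₂ * t) = 0)
    (hs : Real.sin (lam₁ * t) < 0) :
    a₁ * lam₁ * Real.sin (lam₁ * t) + a₂ * lam₂ * Real.sin (lam₂ * t) < 0 := by
  have hz' : a₁ * Real.cos (lam₁ * (-t)) + a₂ * Real.cos (lam₂ * (-t)) = 0 := by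
    rw [mul_neg, mul_neg, Real.cos_neg, Real.cos_neg]; exact hz
  have hs' : 0 < Real.sin (lam₁ * (-t)) := by
    rw [mul_neg, Real.sin_neg]; linarith
  have := stmt4_deriv_sign lam₁ lam₂ a₁ a₂ (-t) hlam hlam₂ ha ha₂ hz' hs'
  rw [mul_neg, mul_neg, Real.sin_neg, Real.sin_neg] at this
  linarith

/-- Sign of `sin` on `(kπ, (k+1)π)`. -/
lemma stmt4_sin_sign (k : ℕ) (x : ℝ)
    (hx1 : (k : ℝ) * Real.pi < x) (hx2 : x < ((k : ℝ) + 1) * Real.pi) :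
    0 < (-1 : ℝ) ^ k * Real.sin x := by
  have h1 : Real.sin x = (-1 : ℝ) ^ k * Real.sin (x - (k : ℝ) * Real.pi) := by
    have := Real.sin_add_nat_mul_pi (x - (k : ℝ) * Real.pi) k
    rw [sub_add_cancel] at this
    rw [this]
  have h2 : 0 < Real.sin (x - (k : ℝ) * Real.pi) :=
    Real.sin_pos_of_pos_of_lt_pi (by linarith) (by nlinarith)
  rw [h1]
  rcases Nat.even_or_odd k with he | ho
  · rw [he.neg_one_pow]; nlinarith
  · rw [ho.neg_one_pow]; nlinarith

/-- For `λ₁ > λ₂ > 0` and `a₁ > a₂ > 0`, the set of zeros of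
`m(t) = a₁ cos(λ₁ t) + a₂ cos(λ₂ t)` in `[0,T]` is finite with
`⌊λ₁T/π⌋ ≤ card ≤ λ₁T/π + 1`. -/
theorem stmt4 (lam₁ lam₂ a₁ a₂ : ℝ)
    (hlam : lam₂ < lam₁) (hlam₂ : 0 < lam₂)
    (ha : a₂ < a₁) (ha₂ : 0 < a₂)
    (T : ℝ) (hT : 0 < T) :
    {t ∈ Icc 0 T | a₁ * Real.cos (lam₁ * t) + a₂ * Real.cos (lam₂ * t) = 0}.Finite ∧
    ⌊lam₁ * T / Real.pi⌋₊ ≤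
      {t ∈ Icc 0 T | a₁ * Real.cos (lam₁ * t) + a₂ * Real.cos (lam₂ * t) = 0}.ncard ∧
    ({t ∈ Icc 0 T | a₁ * Real.cos (lam₁ * t) + a₂ * Real.cos (lam₂ * t) = 0}.ncard : ℝ) ≤
      lam₁ * T / Real.pi + 1 := by
  have hlam₁ : 0 < lam₁ := hlam₂.trans hlam
  have hpi := Real.pi_pos
  set L := Real.pi / lam₁ with hLdef
  have hL : 0 < L := div_pos hpi hlam₁
  set m : ℝ → ℝ := fun t => a₁ * Real.cos (lam₁ * t) + a₂ * Real.cos (lam₂ * t) with hmdef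
  set m' : ℝ → ℝ :=
    fun t => -(a₁ * lam₁ * Real.sin (lam₁ * t) + a₂ * lam₂ * Real.sin (lam₂ * t)) with hm'def
  set Z : Set ℝ := {t ∈ Icc 0 T | m t = 0} with hZdef
  have hder : ∀ x : ℝ, HasDerivAt m (m' x) x := by
    intro x
    have d1 : HasDerivAt (fun t : ℝ => Real.cos (lam₁ * t)) (-Real.sin (lam₁ * x) * (lam₁ * 1)) x :=
      (Real.hasDerivAt_cos (lam₁ * x)).comp x ((hasDerivAt_id x).const_mul lam₁)
    have d2 : HasDerivAt (fun t : ℝ => Real.cos (lam₂ * t)) (-Real.sin (lam₂ * x) * (lam₂ * 1)) x :=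
      (Real.hasDerivAt_cos (lam₂ * x)).comp x ((hasDerivAt_id x).const_mul lam₂)
    have := (d1.const_mul a₁).add (d2.const_mul a₂)
    rw [hmdef, hm'def]
    exact this.congr_deriv (by beta_reduce; ring)
  have hcont : Continuous m := by
    have : Differentiable ℝ m := fun x => (hder x).differentiableAt
    exact this.continuous
  have hgridL : ∀ k : ℕ, lam₁ * ((k : ℝ) * L) = (k : ℝ) * Real.pi := by
    intro k; rw [hLdef]; field_simp
  have hgrid : ∀ k : ℕ, 0 < (-1 : ℝ) ^ k * m ((k : ℝ) * L) := by
    intro k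
    simpa [hmdef, hLdef] using stmt4_grid_sign lam₁ lam₂ a₁ a₂ ha ha₂ hlam₁ k
  have hnotgrid : ∀ k : ℕ, m ((k : ℝ) * L) ≠ 0 := by
    intro k hk
    have := hgrid k
    rw [hk, mul_zero] at this
    exact lt_irrefl 0 this
  -- the derivative condition on each interval
  have hdcond : ∀ k : ℕ, ∀ u ∈ Set.Ioo ((k : ℝ) * L) (((k : ℝ) + 1) * L),
      ((-1 : ℝ) ^ k * m u = 0) → (-1 : ℝ) ^ k * m' u < 0 := by
    intro k u hu hzu
    have hεcases : ((-1 : ℝ) ^ k = 1 ∧ Even k) ∨ ((-1 : ℝ) ^ k = -1 ∧ Odd k) := by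
      rcases Nat.even_or_odd k with he | ho
      · exact Or.inl ⟨he.neg_one_pow, he⟩
      · exact Or.inr ⟨ho.neg_one_pow, ho⟩
    have hmu : m u = 0 := by
      rcases hεcases with ⟨hε, _⟩ | ⟨hε, _⟩ <;> rw [hε] at hzu <;> linarith
    -- sin sign: lam₁ * u ∈ (kπ, (k+1)π)
    have hx1 : (k : ℝ) * Real.pi < lam₁ * u := by
      have := hu.1
      have h := (mul_lt_mul_iff_right₀ hlam₁).2 this
      rwa [hgridL k] at h
    have hx2 : lam₁ * u < ((k : ℝ) + 1) * Real.pi := by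
      have := hu.2
      have h := (mul_lt_mul_iff_right₀ hlam₁).2 this
      have h2 : lam₁ * (((k : ℝ) + 1) * L) = ((k : ℝ) + 1) * Real.pi := by
        rw [hLdef]; field_simp
      rwa [h2] at h
    have hss := stmt4_sin_sign k (lam₁ * u) hx1 hx2
    have hval : m' u = -(a₁ * lam₁ * Real.sin (lam₁ * u) + a₂ * lam₂ * Real.sin (lam₂ * u)) := rfl
    rcases hεcases with ⟨hε, _⟩ | ⟨hε, _⟩
    · rw [hε, one_mul] at hss
      have := stmt4_deriv_sign lam₁ lam₂ a₁ a₂ u hlam hlam₂ ha ha₂ hmu hss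
      rw [hε, one_mul, hval]
      linarith
    · rw [hε] at hss
      have hss' : Real.sin (lam₁ * u) < 0 := by linarith
      have := stmt4_deriv_sign' lam₁ lam₂ a₁ a₂ u hlam hlam₂ ha ha₂ hmu hss'
      rw [hε, hval]
      linarith
  -- uniqueness of zeros in each interval
  have huniq : ∀ k : ℕ, ∀ t ∈ Set.Ioo ((k : ℝ) * L) (((k : ℝ) + 1) * L),
      ∀ s ∈ Set.Ioo ((k : ℝ) * L) (((k : ℝ) + 1) * L), m t = 0 → m s = 0 → t = s := by
    intro k t ht s hs hmt hms
    have := stmt4_unique_zero_aux (fun x => (-1 : ℝ) ^ k * m x) (fun x => (-1 : ℝ) ^ k * m' x)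
      (fun x => (hder x).const_mul _) ((k : ℝ) * L) (((k : ℝ) + 1) * L) (hdcond k)
      t ht s hs (by show (-1 : ℝ) ^ k * m t = 0; rw [hmt, mul_zero])
      (by show (-1 : ℝ) ^ k * m s = 0; rw [hms, mul_zero])
    exact this
  -- existence of a zero in each interval
  have hexists : ∀ k : ℕ, ∃ x ∈ Set.Ioo ((k : ℝ) * L) (((k : ℝ) + 1) * L), m x = 0 := by
    intro k
    set g : ℝ → ℝ := fun x => (-1 : ℝ) ^ k * m x with hgdef
    have hab : (k : ℝ) * L ≤ ((k : ℝ) + 1) * L := by nlinarith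
    have hga : 0 < g ((k : ℝ) * L) := hgrid k
    have hgb : g (((k : ℝ) + 1) * L) < 0 := by
      have h := hgrid (k + 1)
      push_cast at h
      have hpow : (-1 : ℝ) ^ (k + 1) = -((-1 : ℝ) ^ k) := by ring
      rw [hpow] at h
      rw [hgdef]
      simp only [neg_mul] at h ⊢
      linarith
    have hgcont : Continuous g := continuous_const.mul hcont
    have hsub := intermediate_value_Ioo' hab (hgcont.continuousOn :
      ContinuousOn g (Set.Icc ((k : ℝ) * L) (((k : ℝ) + 1) * L)))
    have h0 : (0 : ℝ) ∈ Set.Ioo (g (((k : ℝ) + 1) * L)) (g ((k : ℝ) * L)) := ⟨hgb, hga⟩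
    obtain ⟨x, hx, hgx⟩ := hsub h0
    refine ⟨x, hx, ?_⟩
    have hεcases : ((-1 : ℝ) ^ k = 1) ∨ ((-1 : ℝ) ^ k = -1) := by
      rcases Nat.even_or_odd k with he | ho
      · exact Or.inl he.neg_one_pow
      · exact Or.inr ho.neg_one_pow
    rcases hεcases with hε | hε <;> rw [hgdef] at hgx <;> simp only [hε] at hgx <;> linarith
  -- the counting map
  set K : ℕ := ⌊lam₁ * T / Real.pi⌋₊ with hKdef
  have hTL : lam₁ * T / Real.pi = T / L := by
    rw [hLdef, div_div_eq_mul_div]; ring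
  have hTnn : 0 ≤ lam₁ * T / Real.pi := by positivity
  set φ : ℝ → ℕ := fun t => ⌊t / L⌋₊ with hφdef
  have hmemIoo : ∀ t ∈ Z, t ∈ Set.Ioo (((φ t : ℕ) : ℝ) * L) (((φ t : ℝ) + 1) * L) := by
    intro t ht
    have ht0 : 0 ≤ t := ht.1.1
    have htT : t ≤ T := ht.1.2
    have h0 : 0 ≤ t / L := div_nonneg ht0 hL.le
    have hfl : ((φ t : ℕ) : ℝ) ≤ t / L := Nat.floor_le h0
    have hfl' : t / L < (φ t : ℝ) + 1 := Nat.lt_floor_add_one _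
    have hle : ((φ t : ℕ) : ℝ) * L ≤ t := by
      rw [← le_div_iff₀ hL]; exact hfl
    have hlt : t < ((φ t : ℝ) + 1) * L := by
      rw [← div_lt_iff₀ hL]; exact hfl'
    rcases lt_or_eq_of_le hle with h | h
    · exact ⟨h, hlt⟩
    · exfalso
      apply hnotgrid (φ t)
      rw [h]
      exact ht.2
  have hφle : ∀ t ∈ Z, φ t ≤ K := by
    intro t ht
    have h1 : t / L ≤ T / L := by gcongr; exact ht.1.2
    have h2 : K = ⌊T / L⌋₊ := by rw [hKdef, hTL]
    rw [h2]
    exact Nat.floor_le_floor h1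
  have hinj : Set.InjOn φ Z := by
    intro t ht s hs hts
    have h1 := hmemIoo t ht
    have h2 := hmemIoo s hs
    rw [hts] at h1
    exact huniq (φ s) t h1 s h2 ht.2 hs.2
  have himg : φ '' Z ⊆ ↑(Finset.range (K + 1)) := by
    rintro n ⟨t, ht, rfl⟩
    simp only [Finset.coe_range, Set.mem_Iio]
    exact Nat.lt_succ_of_le (hφle t ht)
  have hfin : Z.Finite :=
    Set.Finite.of_finite_image (((Finset.range (K + 1)).finite_toSet).subset himg) hinj
  have hupper : Z.ncard ≤ K + 1 := by
    have h1 : Z.ncard = (φ '' Z).ncard := (Set.ncard_image_of_injOn hinj).symm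
    rw [h1]
    have h2 := Set.ncard_le_ncard himg ((Finset.range (K + 1)).finite_toSet)
    rwa [Set.ncard_coe_finset, Finset.card_range] at h2
  -- lower bound
  choose z hz1 hz2 using hexists
  have hKL : (K : ℝ) * L ≤ T := by
    have h1 : (K : ℝ) ≤ T / L := by
      rw [← hTL]; exact Nat.floor_le hTnn
    rw [← le_div_iff₀ hL]
    exact h1
  have hzsub : z '' (Set.Iio K) ⊆ Z := by
    rintro x ⟨k, hk, rfl⟩
    refine ⟨⟨?_, ?_⟩, hz2 k⟩
    · have h1 := (hz1 k).1
      have h0 : (0 : ℝ) ≤ (k : ℝ) * L := by positivity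
      linarith
    · have h1 := (hz1 k).2
      have h2 : ((k : ℝ) + 1) * L ≤ (K : ℝ) * L := by
        have h3 : (k : ℝ) + 1 ≤ (K : ℝ) := by exact_mod_cast hk
        nlinarith
      linarith
  have hzmono : StrictMono z := by
    intro i j hij
    have h1 := (hz1 i).2
    have h2 := (hz1 j).1
    have h3 : ((i : ℝ) + 1) * L ≤ (j : ℝ) * L := by
      have h4 : (i : ℝ) + 1 ≤ (j : ℝ) := by exact_mod_cast hij
      nlinarith
    linarith
  have hlower : K ≤ Z.ncard := by
    have h1 : (z '' Set.Iio K).ncard = K := by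
      rw [Set.ncard_image_of_injOn (hzmono.injective.injOn)]
      rw [← Finset.coe_range, Set.ncard_coe_finset, Finset.card_range]
    calc K = (z '' Set.Iio K).ncard := h1.symm
      _ ≤ Z.ncard := Set.ncard_le_ncard hzsub hfin
  have hupperR : (Z.ncard : ℝ) ≤ lam₁ * T / Real.pi + 1 := by
    have h2 : (K : ℝ) ≤ lam₁ * T / Real.pi := Nat.floor_le hTnn
    have h3 : (Z.ncard : ℝ) ≤ (K : ℝ) + 1 := by exact_mod_cast hupper
    linarith
  exact ⟨hfin, hlower, hupperR⟩
end

section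
/- Let λ₁ > λ₂ > 0 and a₁ > a₂ > 0 be real numbers, and let m(t) := a₁·cos(λ₁ t) + a₂·cos(λ₂ t). Then for every nonnegative integer j there exists exactly one t in the closed interval [jπ/λ₁, (j+1)π/λ₁] with m(t) = 0. -/
open Set


-- crossing lemma test
private lemma no_two_zeros' {G : ℝ → ℝ} {A B : ℝ}
    (hc : Continuous G)
    (hd : ∀ t ∈ Icc A B, G t = 0 → ∃ d, HasDerivAt G d t ∧ 0 < d)
    {t₁ t₂ : ℝ} (h₁ : t₁ ∈ Icc A B) (h₂ : t₂ ∈ Icc A B)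
    (hz₁ : G t₁ = 0) (hz₂ : G t₂ = 0) (hlt : t₁ < t₂) : False := by
  obtain ⟨d₁, hD₁, hd₁⟩ := hd t₁ h₁ hz₁
  have hslope₁ : Filter.Tendsto (slope G t₁) (nhdsWithin t₁ {t₁}ᶜ) (nhds d₁) :=
    hasDerivAt_iff_tendsto_slope.mp hD₁
  have hev : ∀ᶠ x in nhdsWithin t₁ {t₁}ᶜ, 0 < slope G t₁ x :=
    hslope₁.eventually (eventually_gt_nhds hd₁)
  have hev' : ∀ᶠ x in nhdsWithin t₁ (Ioi t₁), 0 < slope G t₁ x :=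
    hev.filter_mono (nhdsWithin_mono t₁ (fun x hx => ne_of_gt hx))
  have hIoo : Ioo t₁ t₂ ∈ nhdsWithin t₁ (Ioi t₁) :=
    Ioo_mem_nhdsGT_of_mem ⟨le_refl t₁, hlt⟩
  obtain ⟨u, hsu, huI⟩ := (hev'.and (Filter.eventually_of_mem hIoo (fun x hx => hx))).exists
  have hGu : 0 < G u := by
    have h1 : 0 < u - t₁ := sub_pos.2 huI.1
    rw [slope_def_field, hz₁, sub_zero] at hsu
    have := mul_pos hsu h1
    rwa [div_mul_cancel₀ _ (ne_of_gt h1)] at this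
  set S : Set ℝ := Icc u t₂ ∩ {t | G t ≤ 0} with hS
  have hSclosed : IsClosed S := isClosed_Icc.inter (isClosed_le hc continuous_const)
  have hSne : S.Nonempty := ⟨t₂, ⟨huI.2.le, le_refl _⟩, by simp [hz₂]⟩
  have hSbdd : BddBelow S := (bddBelow_Icc).mono inter_subset_left
  set z := sInf S with hz
  have hzS : z ∈ S := hSclosed.csInf_mem hSne hSbdd
  have huz : u < z := by
    rcases lt_or_eq_of_le hzS.1.1 with h | h
    · exact h
    · exact absurd (h ▸ hzS.2) (not_le.2 hGu)
  have hpos : ∀ t, u ≤ t → t < z → 0 < G t := by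
    intro t hut htz
    by_contra hle
    push_neg at hle
    have : t ∈ S := ⟨⟨hut, htz.le.trans hzS.1.2⟩, hle⟩
    exact absurd (csInf_le hSbdd this) (not_le.2 htz)
  have hGz0 : G z = 0 := by
    have htend : Filter.Tendsto G (nhdsWithin z (Iio z)) (nhds (G z)) :=
      (hc.continuousAt.tendsto).mono_left nhdsWithin_le_nhds
    have hmem : Ioo u z ∈ nhdsWithin z (Iio z) := Ioo_mem_nhdsLT_of_mem ⟨huz, le_refl z⟩
    have : 0 ≤ G z :=
      ge_of_tendsto htend (Filter.eventually_of_mem hmem (fun t ht => (hpos t ht.1.le ht.2).le))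
    exact le_antisymm hzS.2 this
  have hzAB : z ∈ Icc A B := ⟨h₁.1.trans (huI.1.le.trans hzS.1.1), hzS.1.2.trans h₂.2⟩
  obtain ⟨d, hD, hdpos⟩ := hd z hzAB hGz0
  have hslope : Filter.Tendsto (slope G z) (nhdsWithin z {z}ᶜ) (nhds d) :=
    hasDerivAt_iff_tendsto_slope.mp hD
  have hev2 : ∀ᶠ x in nhdsWithin z (Iio z), 0 < slope G z x :=
    (hslope.eventually (eventually_gt_nhds hdpos)).filter_mono
      (nhdsWithin_mono z (fun x hx => ne_of_lt hx))
  have hmem : Ioo u z ∈ nhdsWithin z (Iio z) := Ioo_mem_nhdsLT_of_mem ⟨huz, le_refl z⟩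
  obtain ⟨t, hst, htI⟩ := (hev2.and (Filter.eventually_of_mem hmem (fun x hx => hx))).exists
  have h1 : t - z < 0 := sub_neg.2 htI.2
  rw [slope_def_field, hGz0, sub_zero] at hst
  have hGtneg : G t < 0 := by
    by_contra hge
    push_neg at hge
    have := div_nonpos_of_nonneg_of_nonpos hge h1.le
    exact absurd hst (not_lt.2 this)
  exact absurd (hpos t htI.1.le htI.2) (not_lt.2 hGtneg.le)

private lemma deriv_sign' (lam₁ lam₂ a₁ a₂ : ℝ)
    (hlam : lam₂ < lam₁) (hlam₂ : 0 < lam₂)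
    (ha : a₂ < a₁) (ha₂ : 0 < a₂) (j : ℕ) (t : ℝ)
    (ht : t ∈ Icc ((j : ℝ) * Real.pi / lam₁) (((j : ℝ) + 1) * Real.pi / lam₁))
    (hz : a₁ * Real.cos (lam₁ * t) + a₂ * Real.cos (lam₂ * t) = 0) :
    0 < (-1 : ℝ) ^ (j + 1) *
      (a₁ * (-Real.sin (lam₁ * t) * lam₁) + a₂ * (-Real.sin (lam₂ * t) * lam₂)) := by
  have hlam₁ : 0 < lam₁ := hlam₂.trans hlam
  have ha₁ : 0 < a₁ := ha₂.trans ha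
  set p : ℝ := (-1) ^ j with hp
  set s₁ := Real.sin (lam₁ * t)
  set s₂ := Real.sin (lam₂ * t)
  set c₁ := Real.cos (lam₁ * t)
  set c₂ := Real.cos (lam₂ * t)
  have hp2 : p * p = 1 := by
    rw [hp, ← pow_add]
    exact Even.neg_one_pow ⟨j, rfl⟩
  -- p * s₁ ≥ 0
  have hps : 0 ≤ p * s₁ := by
    have h1 : 0 ≤ lam₁ * t - j * Real.pi := by
      have := ht.1
      have h : (j : ℝ) * Real.pi ≤ lam₁ * t := by
        rw [div_le_iff₀ hlam₁] at this
        nlinarith [this]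
      linarith
    have h2 : lam₁ * t - j * Real.pi ≤ Real.pi := by
      have := ht.2
      have h : lam₁ * t ≤ ((j : ℝ) + 1) * Real.pi := by
        rw [le_div_iff₀ hlam₁] at this
        nlinarith [this]
      linarith
    have h3 : 0 ≤ Real.sin (lam₁ * t - j * Real.pi) :=
      Real.sin_nonneg_of_nonneg_of_le_pi h1 h2
    have h4 : Real.sin (lam₁ * t - j * Real.pi) = p * s₁ := by
      have := Real.sin_nat_mul_pi_sub (lam₁ * t) j
      have h5 : Real.sin (lam₁ * t - j * Real.pi) = -Real.sin (j * Real.pi - lam₁ * t) := by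
        rw [← Real.sin_neg]; ring_nf
      rw [h5, this]; ring
    rwa [h4] at h3
  have pyth₁ : s₁ ^ 2 + c₁ ^ 2 = 1 := Real.sin_sq_add_cos_sq _
  have pyth₂ : s₂ ^ 2 + c₂ ^ 2 = 1 := Real.sin_sq_add_cos_sq _
  have hY2 : (a₂ * s₂) ^ 2 = a₂ ^ 2 - a₁ ^ 2 * c₁ ^ 2 := by
    linear_combination a₂ ^ 2 * pyth₂ + (a₁ * c₁ - a₂ * c₂) * hz
  have hX2 : (a₁ * s₁) ^ 2 = a₁ ^ 2 - a₁ ^ 2 * c₁ ^ 2 := by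
    linear_combination a₁ ^ 2 * pyth₁
  have hKle : a₁ ^ 2 * c₁ ^ 2 ≤ a₂ ^ 2 := by nlinarith [sq_nonneg (a₂ * s₂)]
  have t1 : 0 < lam₁ ^ 2 * (a₁ ^ 2 - a₂ ^ 2) := by
    apply mul_pos (by positivity)
    nlinarith
  have t2 : 0 ≤ (lam₁ ^ 2 - lam₂ ^ 2) * (a₂ ^ 2 - a₁ ^ 2 * c₁ ^ 2) := by
    apply mul_nonneg (by nlinarith) (by linarith)
  have hXY : (a₂ * lam₂ * s₂) ^ 2 < (a₁ * lam₁ * s₁) ^ 2 := by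
    have e1 : (a₁ * lam₁ * s₁) ^ 2 = lam₁ ^ 2 * (a₁ ^ 2 - a₁ ^ 2 * c₁ ^ 2) := by
      linear_combination lam₁ ^ 2 * hX2
    have e2 : (a₂ * lam₂ * s₂) ^ 2 = lam₂ ^ 2 * (a₂ ^ 2 - a₁ ^ 2 * c₁ ^ 2) := by
      linear_combination lam₂ ^ 2 * hY2
    rw [e1, e2]
    nlinarith [t1, t2]
  set X := p * (a₁ * lam₁ * s₁) with hX
  set Y := p * (a₂ * lam₂ * s₂) with hY
  have hXnn : 0 ≤ X := by
    rw [hX]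
    have : p * (a₁ * lam₁ * s₁) = (a₁ * lam₁) * (p * s₁) := by ring
    rw [this]
    exact mul_nonneg (by positivity) hps
  have hXY2 : Y ^ 2 < X ^ 2 := by
    have e1 : X ^ 2 = (a₁ * lam₁ * s₁) ^ 2 := by
      rw [hX]; linear_combination (a₁ * lam₁ * s₁) ^ 2 * hp2
    have e2 : Y ^ 2 = (a₂ * lam₂ * s₂) ^ 2 := by
      rw [hY]; linear_combination (a₂ * lam₂ * s₂) ^ 2 * hp2
    rw [e1, e2]; exact hXY
  have hsum : 0 < X + Y := by
    by_contra hcon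
    push_neg at hcon
    have h1 : 0 ≤ X - Y := by linarith
    have h2 : (X + Y) * (X - Y) ≤ 0 := mul_nonpos_of_nonpos_of_nonneg hcon h1
    nlinarith [h2]
  have hfinal : (-1 : ℝ) ^ (j + 1) *
      (a₁ * (-s₁ * lam₁) + a₂ * (-s₂ * lam₂)) = X + Y := by
    rw [hX, hY, hp, pow_succ]
    ring
  linarith [hfinal ▸ hsum]

/-- For `λ₁ > λ₂ > 0` and `a₁ > a₂ > 0`, the function
`m(t) = a₁ cos(λ₁ t) + a₂ cos(λ₂ t)` has exactly one zero in each half-period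
`[jπ/λ₁, (j+1)π/λ₁]` of `cos(λ₁ t)`. -/
theorem stmt6 (lam₁ lam₂ a₁ a₂ : ℝ)
    (hlam : lam₂ < lam₁) (hlam₂ : 0 < lam₂)
    (ha : a₂ < a₁) (ha₂ : 0 < a₂) (j : ℕ) :
    ∃! t : ℝ, t ∈ Icc ((j : ℝ) * Real.pi / lam₁) (((j : ℝ) + 1) * Real.pi / lam₁) ∧
      a₁ * Real.cos (lam₁ * t) + a₂ * Real.cos (lam₂ * t) = 0 := by
  have hlam₁ : 0 < lam₁ := hlam₂.trans hlam
  have ha₁ : 0 < a₁ := ha₂.trans ha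
  set A : ℝ := (j : ℝ) * Real.pi / lam₁ with hA
  set B : ℝ := ((j : ℝ) + 1) * Real.pi / lam₁ with hB
  set ε : ℝ := (-1) ^ (j + 1) with hε
  set m : ℝ → ℝ := fun t => a₁ * Real.cos (lam₁ * t) + a₂ * Real.cos (lam₂ * t) with hm
  set G : ℝ → ℝ := fun t => ε * m t with hG
  have hεne : ε ≠ 0 := by
    rw [hε]; exact pow_ne_zero _ (by norm_num)
  have hε2 : ε * ε = 1 := by
    rw [hε, ← pow_add]
    exact Even.neg_one_pow ⟨j + 1, rfl⟩
  have hεabs : |ε| = 1 := by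
    rw [hε, abs_pow, abs_neg, abs_one, one_pow]
  have hGzero : ∀ t, G t = 0 ↔ m t = 0 := by
    intro t
    simp only [hG, mul_eq_zero]
    constructor
    · rintro (h | h)
      · exact absurd h hεne
      · exact h
    · exact fun h => Or.inr h
  have hmc : Continuous m := by
    apply Continuous.add
    · exact continuous_const.mul (Real.continuous_cos.comp (continuous_const.mul continuous_id))
    · exact continuous_const.mul (Real.continuous_cos.comp (continuous_const.mul continuous_id))
  have hGc : Continuous G := continuous_const.mul hmc
  have hder : ∀ x : ℝ, HasDerivAt m
      (a₁ * (-Real.sin (lam₁ * x) * lam₁) + a₂ * (-Real.sin (lam₂ * x) * lam₂)) x := by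
    intro x
    have h1 : HasDerivAt (fun t : ℝ => Real.cos (lam₁ * t)) (-Real.sin (lam₁ * x) * lam₁) x := by
      have := (Real.hasDerivAt_cos (lam₁ * x)).comp x ((hasDerivAt_id x).const_mul lam₁)
      simpa [Function.comp_def] using this
    have h2 : HasDerivAt (fun t : ℝ => Real.cos (lam₂ * t)) (-Real.sin (lam₂ * x) * lam₂) x := by
      have := (Real.hasDerivAt_cos (lam₂ * x)).comp x ((hasDerivAt_id x).const_mul lam₂)
      simpa [Function.comp_def] using this
    exact (h1.const_mul a₁).add (h2.const_mul a₂)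
  have hd : ∀ t ∈ Icc A B, G t = 0 → ∃ d, HasDerivAt G d t ∧ 0 < d := by
    intro t ht hGt
    refine ⟨ε * (a₁ * (-Real.sin (lam₁ * t) * lam₁) + a₂ * (-Real.sin (lam₂ * t) * lam₂)),
      (hder t).const_mul ε, ?_⟩
    exact deriv_sign' lam₁ lam₂ a₁ a₂ hlam hlam₂ ha ha₂ j t ht ((hGzero t).mp hGt)
  have hcosA : Real.cos (lam₁ * A) = (-1 : ℝ) ^ j := by
    have h1 : lam₁ * A = (j : ℝ) * Real.pi := by
      rw [hA]; field_simp
    rw [h1]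
    simpa using Real.cos_nat_mul_pi_sub 0 j
  have hcosB : Real.cos (lam₁ * B) = ε := by
    have h1 : lam₁ * B = ((j : ℝ) + 1) * Real.pi := by
      rw [hB]; field_simp
    rw [h1, hε]
    have := Real.cos_nat_mul_pi_sub 0 (j + 1)
    push_cast at this
    simpa using this
  have hGA : G A < 0 := by
    set p : ℝ := (-1) ^ j with hp
    have hεp : ε = -p := by rw [hε, hp, pow_succ]; ring
    have hpp : p * p = 1 := by
      rw [hp, ← pow_add]; exact Even.neg_one_pow ⟨j, rfl⟩
    have hpc : -1 ≤ p * Real.cos (lam₂ * A) := by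
      have h1 : |p * Real.cos (lam₂ * A)| ≤ 1 := by
        rw [abs_mul]
        have h2 : |p| = 1 := by rw [hp, abs_pow, abs_neg, abs_one, one_pow]
        rw [h2, one_mul]
        exact Real.abs_cos_le_one _
      linarith [neg_abs_le (p * Real.cos (lam₂ * A))]
    have hval : G A = -a₁ - a₂ * (p * Real.cos (lam₂ * A)) := by
      simp only [hG, hm, hcosA, ← hp, hεp]
      linear_combination (-a₁ : ℝ) * hpp + a₁ * hpp - a₁ * hpp
    rw [hval]
    nlinarith [hpc, ha₂]
  have hGB : 0 < G B := by
    have hεc : -1 ≤ ε * Real.cos (lam₂ * B) := by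
      have h1 : |ε * Real.cos (lam₂ * B)| ≤ 1 := by
        rw [abs_mul, hεabs, one_mul]
        exact Real.abs_cos_le_one _
      linarith [neg_abs_le (ε * Real.cos (lam₂ * B))]
    have hval : G B = a₁ + a₂ * (ε * Real.cos (lam₂ * B)) := by
      simp only [hG, hm, hcosB]
      linear_combination (a₁ : ℝ) * hε2 - a₁
    rw [hval]
    nlinarith [hεc, ha₂]
  have hAB : A ≤ B := by
    rw [hA, hB, div_le_div_iff₀ hlam₁ hlam₁]
    nlinarith [Real.pi_pos]
  obtain ⟨t0, ht0, hGt0⟩ := intermediate_value_Icc hAB hGc.continuousOn ⟨hGA.le, hGB.le⟩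
  refine ⟨t0, ⟨ht0, (hGzero t0).mp hGt0⟩, ?_⟩
  intro y hy
  have hGy : G y = 0 := (hGzero y).mpr hy.2
  by_contra hne
  rcases lt_or_gt_of_ne hne with h | h
  · exact no_two_zeros' hGc hd hy.1 ht0 hGy hGt0 h
  · exact no_two_zeros' hGc hd ht0 hy.1 hGt0 hGy h
end

section
/- Let n ≥ 1 and let ξ ∈ ℝⁿ with ξ ≠ 0. Then (2π)^{−n/2}·∫_{{x ∈ ℝⁿ : ‖x‖ ≤ 1}} cos(⟨x, ξ⟩) dx = ‖ξ‖^{−n/2}·J_{n/2}(‖ξ‖), where for real p ≥ 0 and x > 0, J_p(x) := (x/2)^p / (Γ(p + 1/2)·√π) · ∫₀^π sin^{2p}(φ)·cos(x·cos φ) dφ. -/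
open Set MeasureTheory


lemma vol_slice (m : ℕ) (s : ℝ) (hs : 0 ≤ s) :
    (volume {y : Fin m → ℝ | ∑ i, y i ^ 2 ≤ s}).toReal =
      Real.sqrt Real.pi ^ m / Real.Gamma (m / 2 + 1) * s ^ ((m : ℝ) / 2) := by
  rcases Nat.eq_zero_or_pos m with hm | hm
  · subst hm
    have h1 : {y : Fin 0 → ℝ | ∑ i, y i ^ 2 ≤ s} = Set.univ := by
      ext y; simp [hs]
    rw [h1]
    rw [MeasureTheory.volume_pi, Measure.pi_univ]
    simp [Real.Gamma_one]
  · have : Nonempty (Fin m) := ⟨⟨0, hm⟩⟩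
    have key : {y : Fin m → ℝ | ∑ i, y i ^ 2 ≤ s} =
        (MeasurableEquiv.toLp 2 (Fin m → ℝ)).symm.symm ⁻¹'
          (Metric.closedBall (0 : EuclideanSpace ℝ (Fin m)) (Real.sqrt s)) := by
      ext y
      simp only [Set.mem_setOf_eq, Set.mem_preimage, Metric.mem_closedBall, dist_zero_right]
      rw [EuclideanSpace.norm_eq]
      constructor
      · intro h
        rw [show (MeasurableEquiv.toLp 2 (Fin m → ℝ)).symm.symm y = WithLp.toLp 2 y from rfl]
        simp only [PiLp.toLp_apply, Real.norm_eq_abs, sq_abs]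
        exact Real.sqrt_le_sqrt h
      · intro h
        rw [show (MeasurableEquiv.toLp 2 (Fin m → ℝ)).symm.symm y = WithLp.toLp 2 y from rfl] at h
        simp only [PiLp.toLp_apply, Real.norm_eq_abs, sq_abs] at h
        have := Real.sqrt_le_sqrt (le_of_eq (rfl : ∑ i, y i ^ 2 = ∑ i, y i ^ 2))
        calc ∑ i, y i ^ 2 = Real.sqrt (∑ i, y i ^ 2) ^ 2 := by
              rw [Real.sq_sqrt (Finset.sum_nonneg fun i _ => sq_nonneg _)]
          _ ≤ Real.sqrt s ^ 2 := by
              apply pow_le_pow_left₀ (Real.sqrt_nonneg _) h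
          _ = s := Real.sq_sqrt hs
    rw [key, ((EuclideanSpace.volume_preserving_symm_measurableEquiv_toLp (Fin m)).symm).measure_preimage
      measurableSet_closedBall.nullMeasurableSet]
    rw [EuclideanSpace.volume_closedBall]
    rw [ENNReal.toReal_mul, ENNReal.toReal_pow, ENNReal.toReal_ofReal (Real.sqrt_nonneg _),
      ENNReal.toReal_ofReal (by positivity)]
    rw [Fintype.card_fin, mul_comm]
    congr 1
    rw [Real.sqrt_eq_rpow, ← Real.rpow_natCast (s ^ ((1:ℝ)/2)) m, ← Real.rpow_mul hs]
    ring_nf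


lemma slice_int (m : ℕ) (r : ℝ) :
    ∫ x in {x : Fin (m+1) → ℝ | ∑ i, x i ^ 2 ≤ 1}, Real.cos (r * x 0) =
      ∫ t in Set.Icc (-1:ℝ) 1,
        (volume {y : Fin m → ℝ | ∑ i, y i ^ 2 ≤ 1 - t ^ 2}).toReal • Real.cos (r * t) := by
  set T : Set (ℝ × (Fin m → ℝ)) := {p | p.1 ^ 2 + ∑ i, p.2 i ^ 2 ≤ 1} with hT
  have hcont : Continuous fun p : ℝ × (Fin m → ℝ) => p.1 ^ 2 + ∑ i, p.2 i ^ 2 := by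
    apply Continuous.add (by fun_prop)
    exact continuous_finset_sum _ fun i _ => by fun_prop
  have Tmeas : MeasurableSet T := hcont.measurable measurableSet_Iic
  have Tclosed : IsClosed T := IsClosed.preimage hcont isClosed_Iic
  have Tsub : T ⊆ Metric.closedBall 0 1 := by
    intro p hp
    simp only [hT, Set.mem_setOf_eq] at hp
    have hsum : (0:ℝ) ≤ ∑ i, p.2 i ^ 2 := Finset.sum_nonneg fun i _ => sq_nonneg _
    rw [Metric.mem_closedBall, dist_zero_right, Prod.norm_def, max_le_iff]
    constructor
    · rw [Real.norm_eq_abs, ← sq_le_one_iff_abs_le_one]; linarith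
    · rw [pi_norm_le_iff_of_nonneg (by norm_num)]
      intro i
      rw [Real.norm_eq_abs, ← sq_le_one_iff_abs_le_one]
      have h2 : p.2 i ^ 2 ≤ ∑ x, p.2 x ^ 2 := Finset.single_le_sum (f := fun i => p.2 i ^ 2)
        (fun i _ => sq_nonneg _) (Finset.mem_univ i)
      linarith [sq_nonneg p.1]
  have Tcomp : IsCompact T :=
    Metric.isCompact_of_isClosed_isBounded Tclosed
      (Metric.isBounded_closedBall.subset Tsub)
  have hint : Integrable (T.indicator fun p : ℝ × (Fin m → ℝ) => Real.cos (r * p.1)) :=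
    (ContinuousOn.integrableOn_compact Tcomp (by fun_prop)).integrable_indicator Tmeas
  -- step 1 : transfer through piFinSuccAbove
  have e := MeasurableEquiv.piFinSuccAbove (fun _ : Fin (m+1) => ℝ) 0
  have hpre : {x : Fin (m+1) → ℝ | ∑ i, x i ^ 2 ≤ 1} =
      (MeasurableEquiv.piFinSuccAbove (fun _ : Fin (m+1) => ℝ) 0) ⁻¹' T := by
    ext x
    simp only [Set.mem_setOf_eq, Set.mem_preimage, hT]
    rw [show (MeasurableEquiv.piFinSuccAbove (fun _ : Fin (m+1) => ℝ) 0) x =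
      (x 0, fun j => x (Fin.succAbove 0 j)) from rfl]
    simp only [Fin.succAbove_zero]
    rw [Fin.sum_univ_succ]
  have key : (∫ x in (⇑(MeasurableEquiv.piFinSuccAbove (fun _ : Fin (m+1) => ℝ) 0)) ⁻¹' T,
      Real.cos (r * x 0)) = ∫ p in T, Real.cos (r * p.1) :=
    (volume_preserving_piFinSuccAbove (fun _ : Fin (m+1) => ℝ) 0).setIntegral_preimage_emb
      (MeasurableEquiv.piFinSuccAbove (fun _ : Fin (m+1) => ℝ) 0).measurableEmbedding
      (fun p => Real.cos (r * p.1)) T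
  rw [hpre, key]
  -- step 2 : indicator + Fubini
  rw [← integral_indicator Tmeas]
  rw [Measure.volume_eq_prod] at hint ⊢
  rw [integral_prod _ hint]
  -- step 3 : inner integral
  have inner_eq : ∀ t : ℝ,
      (∫ y : Fin m → ℝ, T.indicator (fun p => Real.cos (r * p.1)) (t, y)) =
        (volume {y : Fin m → ℝ | ∑ i, y i ^ 2 ≤ 1 - t ^ 2}).toReal • Real.cos (r * t) := by
    intro t
    have smeas : MeasurableSet {y : Fin m → ℝ | ∑ i, y i ^ 2 ≤ 1 - t ^ 2} := by
      have : Continuous fun y : Fin m → ℝ => ∑ i, y i ^ 2 :=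
        continuous_finset_sum _ fun i _ => by fun_prop
      exact this.measurable measurableSet_Iic
    rw [show (fun y : Fin m → ℝ => T.indicator (fun p => Real.cos (r * p.1)) (t, y)) =
        {y : Fin m → ℝ | ∑ i, y i ^ 2 ≤ 1 - t ^ 2}.indicator (fun _ => Real.cos (r * t)) by
      ext y
      by_cases h : ∑ i, y i ^ 2 ≤ 1 - t ^ 2
      · rw [Set.indicator_of_mem (by simpa only [hT, Set.mem_setOf_eq] using by linarith : (t, y) ∈ T),
          Set.indicator_of_mem (by exact h)]
      · rw [Set.indicator_of_notMem (by simp only [hT, Set.mem_setOf_eq]; intro hc; exact h (by linarith)),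
          Set.indicator_of_notMem (by exact h)]]
    exact integral_indicator_const _ smeas
  simp_rw [inner_eq]
  -- step 4 : restrict to Icc
  rw [← setIntegral_eq_integral_of_forall_compl_eq_zero (s := Set.Icc (-1:ℝ) 1)]
  intro t ht
  have ht2 : 1 - t ^ 2 < 0 := by
    simp only [Set.mem_Icc, not_and_or, not_le] at ht
    rcases ht with h | h <;> nlinarith
  have : {y : Fin m → ℝ | ∑ i, y i ^ 2 ≤ 1 - t ^ 2} = ∅ := by
    ext y
    simp only [Set.mem_setOf_eq, Set.mem_empty_iff_false, iff_false, not_le]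
    have : (0:ℝ) ≤ ∑ i, y i ^ 2 := Finset.sum_nonneg fun i _ => sq_nonneg _
    linarith
  rw [this, measure_empty, ENNReal.toReal_zero, zero_smul]


lemma gcont (m : ℕ) (r : ℝ) :
    Continuous fun t : ℝ => (1 - t ^ 2) ^ ((m : ℝ) / 2) * Real.cos (r * t) := by
  apply Continuous.mul _ (by fun_prop)
  apply Continuous.comp (g := fun s : ℝ => s ^ ((m : ℝ) / 2)) _ (by fun_prop)
  rw [continuous_iff_continuousAt]
  intro s
  exact Real.continuousAt_rpow_const s _ (Or.inr (by positivity))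

lemma subst_int (m : ℕ) (r : ℝ) :
    ∫ t in (-1:ℝ)..1, (1 - t ^ 2) ^ ((m : ℝ) / 2) * Real.cos (r * t) =
      ∫ φ in (0:ℝ)..Real.pi, Real.sin φ ^ (m + 1) * Real.cos (r * Real.cos φ) := by
  have key := intervalIntegral.integral_comp_smul_deriv (a := 0) (b := Real.pi)
    (f := Real.cos) (f' := fun x => -Real.sin x)
    (g := fun t => (1 - t ^ 2) ^ ((m : ℝ) / 2) * Real.cos (r * t))
    (fun x _ => Real.hasDerivAt_cos x) (by fun_prop) (gcont m r)
  rw [Real.cos_zero, Real.cos_pi] at key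
  rw [intervalIntegral.integral_symm ((-1):ℝ) 1] at key
  have key2 : (∫ t in (-1:ℝ)..1, (1 - t ^ 2) ^ ((m : ℝ) / 2) * Real.cos (r * t)) =
      -∫ x in (0:ℝ)..Real.pi, (fun x => -Real.sin x) x •
        ((fun t => (1 - t ^ 2) ^ ((m : ℝ) / 2) * Real.cos (r * t)) ∘ Real.cos) x := by
    linarith [key]
  rw [key2, ← intervalIntegral.integral_neg]
  apply intervalIntegral.integral_congr
  intro x hx
  rw [Set.uIcc_of_le Real.pi_pos.le] at hx
  have hsin : 0 ≤ Real.sin x := Real.sin_nonneg_of_nonneg_of_le_pi hx.1 hx.2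
  have hpow : (1 - Real.cos x ^ 2) ^ ((m : ℝ) / 2) = Real.sin x ^ m := by
    rw [← Real.sin_sq, ← Real.rpow_natCast (Real.sin x) 2, ← Real.rpow_mul hsin,
      ← Real.rpow_natCast (Real.sin x) m]
    congr 1
    push_cast
    ring
  simp only [Function.comp, smul_eq_mul]
  rw [hpow, pow_succ]
  ring


lemma icc_int (m : ℕ) (r : ℝ) :
    (∫ t in Set.Icc (-1:ℝ) 1,
        (volume {y : Fin m → ℝ | ∑ i, y i ^ 2 ≤ 1 - t ^ 2}).toReal • Real.cos (r * t)) =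
      Real.sqrt Real.pi ^ m / Real.Gamma (m / 2 + 1) *
        ∫ t in (-1:ℝ)..1, (1 - t ^ 2) ^ ((m : ℝ) / 2) * Real.cos (r * t) := by
  rw [setIntegral_congr_fun measurableSet_Icc
    (g := fun t => Real.sqrt Real.pi ^ m / Real.Gamma (m / 2 + 1) *
      ((1 - t ^ 2) ^ ((m : ℝ) / 2) * Real.cos (r * t))) ?_]
  · rw [MeasureTheory.integral_Icc_eq_integral_Ioc,
      ← intervalIntegral.integral_of_le (by norm_num : (-1:ℝ) ≤ 1),
      intervalIntegral.integral_const_mul]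
  · intro t ht
    simp only [Set.mem_Icc] at ht
    dsimp only
    rw [vol_slice m _ (by nlinarith [ht.1, ht.2])]
    rw [smul_eq_mul]
    ring

lemma ball_pre (n : ℕ) : (⇑(MeasurableEquiv.toLp 2 (Fin n → ℝ)).symm.symm) ⁻¹'
    (Metric.closedBall (0 : EuclideanSpace ℝ (Fin n)) 1) =
      {x : Fin n → ℝ | ∑ i, x i ^ 2 ≤ 1} := by
  ext x
  simp only [Set.mem_preimage, Metric.mem_closedBall, dist_zero_right, Set.mem_setOf_eq]
  rw [EuclideanSpace.norm_eq]
  rw [show ⇑(MeasurableEquiv.toLp 2 (Fin n → ℝ)).symm.symm x = WithLp.toLp 2 x from rfl]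
  simp only [PiLp.toLp_apply, Real.norm_eq_abs, sq_abs]
  have hs : (0:ℝ) ≤ ∑ i, x i ^ 2 := Finset.sum_nonneg fun i _ => sq_nonneg _
  constructor
  · intro h
    nlinarith [Real.sq_sqrt hs, Real.sqrt_nonneg (∑ i, x i ^ 2)]
  · intro h
    rw [show (1:ℝ) = Real.sqrt 1 from (Real.sqrt_one).symm]
    exact Real.sqrt_le_sqrt h


lemma rot (m : ℕ) (ξ : EuclideanSpace ℝ (Fin (m+1))) (hξ : ξ ≠ 0) :
    (∫ x in Metric.closedBall (0 : EuclideanSpace ℝ (Fin (m+1))) 1, Real.cos (inner ℝ x ξ : ℝ)) =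
      ∫ y in Metric.closedBall (0 : EuclideanSpace ℝ (Fin (m+1))) 1, Real.cos (‖ξ‖ * y 0) := by
  set v : EuclideanSpace ℝ (Fin (m+1)) := ‖ξ‖⁻¹ • ξ with hvdef
  have hv : ‖v‖ = 1 := norm_smul_inv_norm hξ
  have horth : Orthonormal ℝ (({0} : Set (Fin (m+1))).restrict fun _ : Fin (m+1) => v) := by
    refine ⟨fun i => hv, fun i j hij => ?_⟩
    exact absurd (Subtype.ext ((Set.mem_singleton_iff.mp i.2).trans
      (Set.mem_singleton_iff.mp j.2).symm)) hij
  have hcard : Module.finrank ℝ (EuclideanSpace ℝ (Fin (m+1))) = Fintype.card (Fin (m+1)) := by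
    simp [finrank_euclideanSpace]
  obtain ⟨b, hb⟩ := horth.exists_orthonormalBasis_extension_of_card_eq hcard
  have hb0 : b 0 = v := hb 0 (Set.mem_singleton 0)
  have key := (b.repr.symm.measurePreserving).setIntegral_preimage_emb
    b.repr.symm.toHomeomorph.measurableEmbedding
    (fun x => Real.cos (inner ℝ x ξ : ℝ)) (Metric.closedBall 0 1)
  have hpre : ⇑b.repr.symm ⁻¹' Metric.closedBall (0 : EuclideanSpace ℝ (Fin (m+1))) 1 =
      Metric.closedBall 0 1 := by
    ext y
    simp [mem_closedBall_zero_iff]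
  rw [← key, hpre]
  apply setIntegral_congr_fun measurableSet_closedBall
  intro y _
  dsimp only
  congr 1
  have hξv : ξ = ‖ξ‖ • v := (smul_inv_smul₀ (norm_ne_zero_iff.mpr hξ) ξ).symm
  calc (inner ℝ (b.repr.symm y) ξ : ℝ) = (inner ℝ (b.repr.symm y) (‖ξ‖ • v) : ℝ) := by rw [← hξv]
    _ = ‖ξ‖ * (inner ℝ (b.repr.symm y) v : ℝ) := real_inner_smul_right _ _ _
    _ = ‖ξ‖ * (inner ℝ (b 0) (b.repr.symm y) : ℝ) := by rw [real_inner_comm, hb0]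
    _ = ‖ξ‖ * (b.repr (b.repr.symm y)) 0 := by rw [b.repr_apply_apply]
    _ = ‖ξ‖ * y 0 := by rw [LinearIsometryEquiv.apply_symm_apply]

lemma eucl_to_pi (m : ℕ) (r : ℝ) :
    (∫ y in Metric.closedBall (0 : EuclideanSpace ℝ (Fin (m+1))) 1, Real.cos (r * y 0)) =
      ∫ x in {x : Fin (m+1) → ℝ | ∑ i, x i ^ 2 ≤ 1}, Real.cos (r * x 0) := by
  have key : (∫ x in (⇑(MeasurableEquiv.toLp 2 (Fin (m+1) → ℝ)).symm.symm) ⁻¹'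
        (Metric.closedBall (0 : EuclideanSpace ℝ (Fin (m+1))) 1), Real.cos (r * x 0)) =
      ∫ y in Metric.closedBall (0 : EuclideanSpace ℝ (Fin (m+1))) 1, Real.cos (r * y 0) :=
    ((EuclideanSpace.volume_preserving_symm_measurableEquiv_toLp (Fin (m+1))).symm).setIntegral_preimage_emb
      (MeasurableEquiv.toLp 2 (Fin (m+1) → ℝ)).symm.symm.measurableEmbedding
      (fun y => Real.cos (r * y 0)) _
  rw [← key, ball_pre]


/-- The Bessel function of order `p ≥ 0` in its Poisson integral representation. -/
noncomputable def besselJ (p : ℝ) (x : ℝ) : ℝ :=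
  (x / 2) ^ p / (Real.Gamma (p + 1 / 2) * Real.sqrt Real.pi) *
    ∫ φ in (0 : ℝ)..Real.pi, Real.sin φ ^ (2 * p) * Real.cos (x * Real.cos φ)

/-- the Fourier transform of the indicator of the unit ball in `ℝⁿ`:
`(2π)^{−n/2} ∫_{‖x‖ ≤ 1} cos⟨x, ξ⟩ dx = ‖ξ‖^{−n/2} J_{n/2}(‖ξ‖)` for `ξ ≠ 0`. -/
theorem stmt9 (n : ℕ) (hn : 1 ≤ n) (ξ : EuclideanSpace ℝ (Fin n)) (hξ : ξ ≠ 0) :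
    (2 * Real.pi) ^ (-(n : ℝ) / 2) *
        ∫ x in Metric.closedBall (0 : EuclideanSpace ℝ (Fin n)) 1,
          Real.cos (inner ℝ x ξ : ℝ) =
      ‖ξ‖ ^ (-(n : ℝ) / 2) * besselJ ((n : ℝ) / 2) ‖ξ‖ := by
  obtain ⟨m, rfl⟩ : ∃ m, n = m + 1 := ⟨n - 1, (Nat.succ_pred_eq_of_pos hn).symm⟩
  have hr : 0 < ‖ξ‖ := norm_pos_iff.mpr hξ
  have hπ := Real.pi_pos
  rw [rot m ξ hξ, eucl_to_pi m ‖ξ‖, slice_int m ‖ξ‖, icc_int m ‖ξ‖, subst_int m ‖ξ‖,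
    besselJ]
  have hI : (∫ φ in (0:ℝ)..Real.pi,
        Real.sin φ ^ (2 * ((↑(m+1):ℝ)/2)) * Real.cos (‖ξ‖ * Real.cos φ)) =
      ∫ φ in (0:ℝ)..Real.pi, Real.sin φ ^ (m+1) * Real.cos (‖ξ‖ * Real.cos φ) := by
    apply intervalIntegral.integral_congr
    intro x _
    dsimp only
    rw [show 2 * ((↑(m+1):ℝ)/2) = ((m+1 : ℕ):ℝ) by push_cast; ring, Real.rpow_natCast]
  rw [hI]
  have hG : Real.Gamma ((↑(m+1):ℝ)/2 + 1/2) = Real.Gamma ((m:ℝ)/2 + 1) := by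
    congr 1
    push_cast
    ring
  rw [neg_div, hG]
  set p : ℝ := (↑(m+1):ℝ)/2 with hp
  suffices hc : (2*Real.pi)^(-p) * (Real.sqrt Real.pi ^ m / Real.Gamma ((m:ℝ)/2 + 1)) =
      ‖ξ‖^(-p) * ((‖ξ‖/2)^p / (Real.Gamma ((m:ℝ)/2 + 1) * Real.sqrt Real.pi)) by
    rw [← mul_assoc, ← mul_assoc, hc]
  have h1 : (2*Real.pi)^(-p) = 2^(-p) * Real.pi^(-p) :=
    Real.mul_rpow (by norm_num) hπ.le
  have h2 : (Real.sqrt Real.pi) ^ m = Real.pi ^ ((m:ℝ)/2) := by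
    rw [Real.sqrt_eq_rpow, ← Real.rpow_natCast (Real.pi ^ ((1:ℝ)/2)) m,
      ← Real.rpow_mul hπ.le]
    congr 1
    ring
  have h3 : Real.pi^(-p) * Real.pi^((m:ℝ)/2) = (Real.sqrt Real.pi)⁻¹ := by
    rw [← Real.rpow_add hπ, show -p + (m:ℝ)/2 = -(1/2) by rw [hp]; push_cast; ring,
      Real.rpow_neg hπ.le, Real.sqrt_eq_rpow]
  have h4 : ‖ξ‖^(-p) * (‖ξ‖/2)^p = (2:ℝ)^(-p) := by
    rw [Real.div_rpow hr.le (by norm_num : (0:ℝ) ≤ 2), ← mul_div_assoc,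
      ← Real.rpow_add hr, neg_add_cancel, Real.rpow_zero, one_div,
      ← Real.rpow_neg (by norm_num : (0:ℝ) ≤ 2)]
  calc (2*Real.pi)^(-p) * (Real.sqrt Real.pi ^ m / Real.Gamma ((m:ℝ)/2 + 1))
      = 2^(-p) * ((Real.pi^(-p) * Real.pi^((m:ℝ)/2)) / Real.Gamma ((m:ℝ)/2 + 1)) := by
        rw [h1, h2]; ring
    _ = 2^(-p) * ((Real.sqrt Real.pi)⁻¹ / Real.Gamma ((m:ℝ)/2 + 1)) := by rw [h3]
    _ = (‖ξ‖^(-p) * (‖ξ‖/2)^p) * ((Real.sqrt Real.pi)⁻¹ / Real.Gamma ((m:ℝ)/2 + 1)) := by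
        rw [h4]
    _ = ‖ξ‖^(-p) * ((‖ξ‖/2)^p / (Real.Gamma ((m:ℝ)/2 + 1) * Real.sqrt Real.pi)) := by
        ring
end
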